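/- Let Ω₀ > 4/√π. Then the function ρ^TF(x) = max(0, (Ω₀²/8)(|x|² − 1) + Ω₀/(2√π)) is nonnegative with ∫_{B₁}ρ^TF = 1, vanishes exactly on the 'hole' {|x| ≤ R₀} where R₀ = √(1 − 4/(√π Ω₀)), the Thomas–Fermi functional satisfies E^TF[ρ] ≥ E^TF[ρ^TF] for every ρ ∈ L²(B₁) with ρ ≥ 0 a.e. and ∫_{B₁}ρ = 1, with equality if and only if ρ = ρ^TF a.e., and the minimum value is E^TF = (Ω₀/4)(8/(3√π) − Ω₀). -/

import Mathlib

open MeasureTheory Real Filter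

noncomputable section

/-- Points of the plane. -/
abbrev Pt : Type := EuclideanSpace ℝ (Fin 2)

/-- The open unit disc. -/
def B1 : Set Pt := Metric.ball 0 1

/-- First partial derivative of a complex-valued function. -/
def pd1 (Ψ : Pt → ℂ) (x : Pt) : ℂ := fderiv ℝ Ψ x (EuclideanSpace.single 0 1)

/-- Second partial derivative of a complex-valued function. -/
def pd2 (Ψ : Pt → ℂ) (x : Pt) : ℂ := fderiv ℝ Ψ x (EuclideanSpace.single 1 1)

/-- Angular momentum operator `L = -i (x₁ ∂₂ - x₂ ∂₁)`. -/
def angMom (Ψ : Pt → ℂ) (x : Pt) : ℂ :=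
  -Complex.I * ((x 0 : ℂ) * pd2 Ψ x - (x 1 : ℂ) * pd1 Ψ x)

/-- The Gross-Pitaevskii energy density `|∇Ψ|² - Ω conj(Ψ) LΨ + |Ψ|⁴/ε²`. -/
def gpDensity (ε Ω : ℝ) (Ψ : Pt → ℂ) (x : Pt) : ℝ :=
  ‖pd1 Ψ x‖ ^ 2 + ‖pd2 Ψ x‖ ^ 2
    - Ω * (starRingEnd ℂ (Ψ x) * angMom Ψ x).re
    + ‖Ψ x‖ ^ 4 / ε ^ 2

/-- The Gross-Pitaevskii functional on the unit disc. -/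
def gpEnergy (ε Ω : ℝ) (Ψ : Pt → ℂ) : ℝ := ∫ x in B1, gpDensity ε Ω Ψ x

/-- Admissible (H¹, normalized) wave functions. -/
def gpAdm (Ψ : Pt → ℂ) : Prop :=
  DifferentiableOn ℝ Ψ B1 ∧
  IntegrableOn (fun x => ‖Ψ x‖ ^ 2) B1 ∧
  IntegrableOn (fun x => ‖pd1 Ψ x‖ ^ 2 + ‖pd2 Ψ x‖ ^ 2) B1 ∧
  IntegrableOn (fun x => ‖Ψ x‖ ^ 4) B1 ∧
  IntegrableOn (fun x => (starRingEnd ℂ (Ψ x) * angMom Ψ x).re) B1 ∧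
  (∫ x in B1, ‖Ψ x‖ ^ 2) = 1

/-- The GP ground-state energy: infimum of the functional over normalized functions. -/
def gpGround (ε Ω : ℝ) : ℝ := sInf {E | ∃ Ψ : Pt → ℂ, gpAdm Ψ ∧ E = gpEnergy ε Ω Ψ}

/-- A GP minimizer: a normalized admissible function attaining the infimum. -/
def IsGPMinimizer (ε Ω : ℝ) (Ψ : Pt → ℂ) : Prop :=
  gpAdm Ψ ∧ gpEnergy ε Ω Ψ = gpGround ε Ω

/-- The Thomas-Fermi functional. -/
def tfEnergy (Ω₀ : ℝ) (ρ : Pt → ℝ) : ℝ :=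
  ∫ x in B1, ((ρ x) ^ 2 - Ω₀ ^ 2 * ‖x‖ ^ 2 * ρ x / 4)

/-- Admissible TF densities: nonnegative, in L²(B₁), of total mass one. -/
def tfAdm (ρ : Pt → ℝ) : Prop :=
  IntegrableOn ρ B1 ∧ IntegrableOn (fun x => (ρ x) ^ 2) B1 ∧
  (∀ᵐ x ∂(volume.restrict B1), 0 ≤ ρ x) ∧ (∫ x in B1, ρ x) = 1

/-- The TF ground-state energy. -/
def tfGround (Ω₀ : ℝ) : ℝ := sInf {E | ∃ ρ : Pt → ℝ, tfAdm ρ ∧ E = tfEnergy Ω₀ ρ}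

/-- Radius of the TF "hole". -/
def R0 (Ω₀ : ℝ) : ℝ := Real.sqrt (1 - 4 / (Real.sqrt π * Ω₀))

/-- The TF minimizer. -/
def rhoTF (Ω₀ : ℝ) (x : Pt) : ℝ :=
  if Ω₀ ≤ 4 / Real.sqrt π then 1 / π - Ω₀ ^ 2 / 16 * (1 - 2 * ‖x‖ ^ 2)
  else max 0 (Ω₀ ^ 2 / 8 * (‖x‖ ^ 2 - 1) + Ω₀ / (2 * Real.sqrt π))

/-- The TF minimizer in the regime `Ω₀ > 4/√π`. -/
def rho7 (Ω₀ : ℝ) (x : Pt) : ℝ :=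
  max 0 (Ω₀ ^ 2 / 8 * (‖x‖ ^ 2 - 1) + Ω₀ / (2 * Real.sqrt π))


lemma radial_int (f : ℝ → ℝ) :
    ∫ x in B1, f ‖x‖ = 2 * π * ∫ y in Set.Ioo (0:ℝ) 1, y * f y := by
  have hvol : (volume (Metric.ball (0:Pt) 1)).toReal = π := by
    rw [EuclideanSpace.volume_ball]
    have hg : Real.Gamma (1+1) = 1 := by simpa using Real.Gamma_nat_eq_factorial 1
    simp [hg, Real.sq_sqrt Real.pi_pos.le, ENNReal.toReal_ofReal Real.pi_pos.le]
  have h1 : ∫ x in B1, f ‖x‖ = ∫ x : Pt, Set.indicator (Set.Iio (1:ℝ)) f ‖x‖ := by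
    rw [← integral_indicator (by exact Metric.isOpen_ball.measurableSet)]
    congr 1
    funext x
    by_cases hx : ‖x‖ < 1
    · simp [Set.indicator, B1, Metric.mem_ball, dist_zero_right, hx]
    · simp [Set.indicator, B1, Metric.mem_ball, dist_zero_right, hx]
  rw [h1, MeasureTheory.integral_fun_norm_addHaar volume (Set.indicator (Set.Iio (1:ℝ)) f)]
  have hdim : Module.finrank ℝ Pt = 2 := by simp [finrank_euclideanSpace]
  rw [hdim, measureReal_def, hvol]
  have h2 : ∀ y : ℝ, y ^ (2-1) • Set.indicator (Set.Iio (1:ℝ)) f y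
      = Set.indicator (Set.Iio (1:ℝ)) (fun y => y * f y) y := by
    intro y
    by_cases hy : y < 1 <;> simp [Set.indicator, hy]
  simp only [h2]
  rw [MeasureTheory.setIntegral_indicator measurableSet_Iio, Set.Ioi_inter_Iio]
  simp only [nsmul_eq_mul, smul_eq_mul, Nat.cast_ofNat]
  ring

lemma Ioo_int (g : ℝ → ℝ) : ∫ y in Set.Ioo (0:ℝ) 1, g y = ∫ y in (0:ℝ)..1, g y := by
  rw [intervalIntegral.integral_of_le zero_le_one, integral_Ioc_eq_integral_Ioo]

section
variable {Ω₀ : ℝ} (h : 4 / Real.sqrt π < Ω₀)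
include h

lemma hπ' : (0:ℝ) < Real.sqrt π := Real.sqrt_pos.mpr pi_pos
lemma hΩ' : 0 < Ω₀ := lt_trans (by positivity) h
lemma hπΩ' : 4 < Real.sqrt π * Ω₀ := by
  rw [div_lt_iff₀ (hπ' h)] at h; linarith
lemma hR2' : R0 Ω₀ ^ 2 = 1 - 4 / (Real.sqrt π * Ω₀) := by
  rw [R0, Real.sq_sqrt]
  have h1 : 4 / (Real.sqrt π * Ω₀) < 1 := (div_lt_one (by linarith [hπΩ' h])).mpr (hπΩ' h)
  linarith
lemma hR1' : R0 Ω₀ ≤ 1 := by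
  rw [R0]
  have h4 : (0:ℝ) < Real.sqrt π * Ω₀ := by linarith [hπΩ' h]
  have : 0 < 4 / (Real.sqrt π * Ω₀) := div_pos four_pos h4
  exact Real.sqrt_le_one.mpr (by linarith)
lemma hkey' : ∀ y : ℝ, Ω₀^2/8*(y^2-1) + Ω₀/(2*Real.sqrt π) = Ω₀^2/8*(y^2 - R0 Ω₀^2) := by
  intro y
  rw [hR2' h]
  have h1 := (hπ' h).ne'
  have h2 := (hΩ' h).ne'
  field_simp
  ring

lemma cont_f1 : Continuous (fun r : ℝ => max 0 (Ω₀^2/8*(r^2-1) + Ω₀/(2*Real.sqrt π))) := by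
  apply continuous_const.max
  continuity

lemma mass_eq : ∫ x in B1, rho7 Ω₀ x = 1 := by
  set R := R0 Ω₀ with hR
  have hR0 : 0 ≤ R := Real.sqrt_nonneg _
  have hR1 : R ≤ 1 := hR1' h
  set f1 : ℝ → ℝ := fun r => max 0 (Ω₀^2/8*(r^2-1) + Ω₀/(2*Real.sqrt π)) with hf1
  have hstep : (∫ x in B1, rho7 Ω₀ x) = ∫ x in B1, f1 ‖x‖ := rfl
  rw [hstep, radial_int, Ioo_int]
  have hadj : (∫ y in (0:ℝ)..R, y * f1 y) + (∫ y in R..1, y * f1 y)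
      = ∫ y in (0:ℝ)..1, y * f1 y := by
    apply intervalIntegral.integral_add_adjacent_intervals <;>
      exact (continuous_id.mul (cont_f1 h)).intervalIntegrable _ _
  have hzero : (∫ y in (0:ℝ)..R, y * f1 y) = 0 := by
    rw [intervalIntegral.integral_congr (g := fun _ => 0), intervalIntegral.integral_const,
      smul_zero]
    intro y hy
    rw [Set.uIcc_of_le hR0] at hy
    have hy2 : y^2 ≤ R^2 := by nlinarith [hy.1, hy.2]
    have hle : Ω₀^2/8*(y^2-1) + Ω₀/(2*Real.sqrt π) ≤ 0 := by
      rw [hkey' h y, ← hR]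
      nlinarith [sq_nonneg Ω₀]
    simp [hf1, max_eq_left hle]
  have hann : (∫ y in R..1, y * f1 y) = ∫ y in R..1, (Ω₀^2/8 * (y^3 - R^2*y)) := by
    apply intervalIntegral.integral_congr
    intro y hy
    rw [Set.uIcc_of_le hR1] at hy
    have hy2 : R^2 ≤ y^2 := by nlinarith [hy.1, hy.2]
    have hge : 0 ≤ Ω₀^2/8*(y^2-1) + Ω₀/(2*Real.sqrt π) := by
      rw [hkey' h y, ← hR]
      nlinarith [sq_nonneg Ω₀]
    simp only [hf1, max_eq_right hge, hkey' h y, ← hR]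
    ring
  have hpoly : (∫ y in R..1, (Ω₀^2/8 * (y^3 - R^2*y)))
      = Ω₀^2/8 * ((1 - R^4)/4 - R^2 * ((1 - R^2)/2)) := by
    have i1 : IntervalIntegrable (fun y:ℝ => y^3) volume R 1 :=
      (continuous_pow 3).intervalIntegrable _ _
    have i2 : IntervalIntegrable (fun y:ℝ => R^2*y) volume R 1 := by
      apply Continuous.intervalIntegrable; fun_prop
    rw [intervalIntegral.integral_const_mul, intervalIntegral.integral_sub i1 i2,
      _root_.integral_pow, intervalIntegral.integral_const_mul,
      _root_.integral_id]
    norm_num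
  rw [← hadj, hzero, hann, hpoly, zero_add]
  have h4 : R^4 = (R^2)^2 := by ring
  rw [h4, hR2' h]
  set S := Real.sqrt π with hS
  have h1 : S ≠ 0 := (hπ' h).ne'
  have h2 : Ω₀ ≠ 0 := (hΩ' h).ne'
  have hss : S * S = π := Real.mul_self_sqrt pi_pos.le
  rw [← hss]
  field_simp
  ring
lemma energy_eq : tfEnergy Ω₀ (rho7 Ω₀) = Ω₀ / 4 * (8 / (3 * Real.sqrt π) - Ω₀) := by
  set R := R0 Ω₀ with hR
  have hR0 : 0 ≤ R := Real.sqrt_nonneg _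
  have hR1 : R ≤ 1 := hR1' h
  set f1 : ℝ → ℝ := fun r => max 0 (Ω₀^2/8*(r^2-1) + Ω₀/(2*Real.sqrt π)) with hf1
  set f2 : ℝ → ℝ := fun r => (f1 r)^2 - Ω₀^2 * r^2 * f1 r / 4 with hf2
  have hstep : tfEnergy Ω₀ (rho7 Ω₀) = ∫ x in B1, f2 ‖x‖ := rfl
  rw [hstep, radial_int, Ioo_int]
  have hcf2 : Continuous f2 := by
    apply Continuous.sub ((cont_f1 h).pow 2)
    fun_prop (disch := exact cont_f1 h)
  have hadj : (∫ y in (0:ℝ)..R, y * f2 y) + (∫ y in R..1, y * f2 y)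
      = ∫ y in (0:ℝ)..1, y * f2 y := by
    apply intervalIntegral.integral_add_adjacent_intervals <;>
      exact (continuous_id.mul hcf2).intervalIntegrable _ _
  have hzero : (∫ y in (0:ℝ)..R, y * f2 y) = 0 := by
    rw [intervalIntegral.integral_congr (g := fun _ => 0), intervalIntegral.integral_const,
      smul_zero]
    intro y hy
    rw [Set.uIcc_of_le hR0] at hy
    have hy2 : y^2 ≤ R^2 := by nlinarith [hy.1, hy.2]
    have hle : Ω₀^2/8*(y^2-1) + Ω₀/(2*Real.sqrt π) ≤ 0 := by
      rw [hkey' h y, ← hR]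
      nlinarith [sq_nonneg Ω₀]
    simp [hf2, hf1, max_eq_left hle]
  have hann : (∫ y in R..1, y * f2 y)
      = ∫ y in R..1, (-(Ω₀^2/8)^2 * (y^5 - R^4*y)) := by
    apply intervalIntegral.integral_congr
    intro y hy
    rw [Set.uIcc_of_le hR1] at hy
    have hy2 : R^2 ≤ y^2 := by nlinarith [hy.1, hy.2]
    have hge : 0 ≤ Ω₀^2/8*(y^2 - R^2) := by nlinarith [sq_nonneg Ω₀]
    have hmax : f1 y = Ω₀^2/8*(y^2 - R^2) := by
      simp only [hf1]
      rw [hkey' h y, ← hR]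
      exact max_eq_right hge
    simp only [hf2, hmax]
    ring
  have hpoly : (∫ y in R..1, (-(Ω₀^2/8)^2 * (y^5 - R^4*y)))
      = -(Ω₀^2/8)^2 * ((1 - R^6)/6 - R^4 * ((1 - R^2)/2)) := by
    have i1 : IntervalIntegrable (fun y:ℝ => y^5) volume R 1 :=
      (continuous_pow 5).intervalIntegrable _ _
    have i2 : IntervalIntegrable (fun y:ℝ => R^4*y) volume R 1 := by
      apply Continuous.intervalIntegrable; fun_prop
    rw [intervalIntegral.integral_const_mul, intervalIntegral.integral_sub i1 i2,
      _root_.integral_pow, intervalIntegral.integral_const_mul,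
      _root_.integral_id]
    norm_num
  rw [← hadj, hzero, hann, hpoly, zero_add]
  have h4 : R^4 = (R^2)^2 := by ring
  have h6 : R^6 = (R^2)^3 := by ring
  rw [h6, h4, hR2' h]
  set S := Real.sqrt π with hS
  have h1 : S ≠ 0 := (hπ' h).ne'
  have h2 : Ω₀ ≠ 0 := (hΩ' h).ne'
  have hss : S * S = π := Real.mul_self_sqrt pi_pos.le
  rw [← hss]
  field_simp
  ring
end

lemma key1 (t w : ℝ) (ht : 0 ≤ t) :
    0 ≤ (t^2 - w*t) - ((max 0 (w/2))^2 - w * max 0 (w/2)) := by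
  rcases le_total w 0 with hw|hw
  · rw [max_eq_left (by linarith)]; nlinarith
  · rw [max_eq_right (by linarith)]; nlinarith [sq_nonneg (t - w/2)]

lemma key2 (t w : ℝ) (ht : 0 ≤ t)
    (h0 : (t^2 - w*t) - ((max 0 (w/2))^2 - w * max 0 (w/2)) = 0) : t = max 0 (w/2) := by
  rcases le_total w 0 with hw|hw
  · rw [max_eq_left (by linarith)] at *
    have ht2 : t^2 = 0 := le_antisymm (by nlinarith) (sq_nonneg t)
    exact (pow_eq_zero_iff two_ne_zero).mp ht2
  · rw [max_eq_right (by linarith)] at *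
    have h2 : (t - w/2)^2 = 0 := by linear_combination h0
    have h3 : t - w/2 = 0 := (pow_eq_zero_iff two_ne_zero).mp h2
    linarith

section
variable {Ω₀ : ℝ} (h : 4 / Real.sqrt π < Ω₀)
include h

lemma hp' : ∀ x : Pt, rho7 Ω₀ x
    = max 0 ((Ω₀^2*‖x‖^2/4 - (Ω₀^2/4 - Ω₀/Real.sqrt π))/2) := by
  intro x
  rw [rho7]
  congr 1
  have h1 := (hπ' h).ne'
  field_simp
  ring

lemma var' (ρ : Pt → ℝ) (hadm : tfAdm ρ) :
    tfEnergy Ω₀ (rho7 Ω₀) ≤ tfEnergy Ω₀ ρ ∧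
    (tfEnergy Ω₀ ρ = tfEnergy Ω₀ (rho7 Ω₀) ↔ ρ =ᵐ[volume.restrict B1] rho7 Ω₀) := by
  obtain ⟨hρi, hρ2i, hρ0, hρm⟩ := hadm
  set μ0 : ℝ := Ω₀^2/4 - Ω₀/Real.sqrt π with hμ0
  have hmeasB : MeasurableSet B1 := Metric.isOpen_ball.measurableSet
  have hVρ : IntegrableOn (fun x => Ω₀^2 * ‖x‖^2 * ρ x / 4) B1 := by
    apply Integrable.mono' (g := fun x => Ω₀^2/4 * |ρ x|) (hρi.abs.const_mul _)
    · have hc : AEStronglyMeasurable (fun x : Pt => Ω₀^2/4*‖x‖^2) (volume.restrict B1) :=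
        (continuous_const.mul (continuous_norm.pow 2)).aestronglyMeasurable
      exact (hc.mul hρi.1).congr (ae_of_all _ fun x => by simp only [Pi.mul_apply]; ring)
    · rw [ae_restrict_iff' hmeasB]
      apply ae_of_all
      intro x hx
      have hx1 : ‖x‖ < 1 := by simpa [B1, mem_ball_zero_iff] using hx
      have hx0 : (0:ℝ) ≤ ‖x‖ := norm_nonneg x
      rw [Real.norm_eq_abs, abs_div, abs_mul, abs_mul, abs_of_nonneg (sq_nonneg Ω₀),
        abs_of_nonneg (sq_nonneg ‖x‖)]
      have h4 : |(4:ℝ)| = 4 := by norm_num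
      rw [h4]
      have hb : (0:ℝ) ≤ Ω₀^2 * |ρ x| * (1 - ‖x‖^2) :=
        mul_nonneg (mul_nonneg (sq_nonneg Ω₀) (abs_nonneg _)) (by nlinarith)
      nlinarith [hb]
  have hcontρ7 : Continuous (rho7 Ω₀) := by
    apply continuous_const.max; fun_prop
  have hcomp : IsCompact (Metric.closedBall (0:Pt) 1) := isCompact_closedBall _ _
  have hρ7i : IntegrableOn (rho7 Ω₀) B1 :=
    (hcontρ7.continuousOn.integrableOn_compact hcomp).mono_set Metric.ball_subset_closedBall
  have hρ72i : IntegrableOn (fun x => rho7 Ω₀ x ^ 2) B1 :=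
    (((hcontρ7.pow 2)).continuousOn.integrableOn_compact hcomp).mono_set
      Metric.ball_subset_closedBall
  have hVρ7 : IntegrableOn (fun x => Ω₀^2 * ‖x‖^2 * rho7 Ω₀ x / 4) B1 := by
    have hc : Continuous (fun x : Pt => Ω₀^2 * ‖x‖^2 * rho7 Ω₀ x / 4) := by fun_prop
    exact (hc.continuousOn.integrableOn_compact hcomp).mono_set Metric.ball_subset_closedBall
  have hmassρ7 : ∫ x in B1, rho7 Ω₀ x = 1 := mass_eq h
  set g : Pt → ℝ := fun x => (ρ x^2 - Ω₀^2*‖x‖^2*ρ x/4 + μ0 * ρ x)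
      - (rho7 Ω₀ x^2 - Ω₀^2*‖x‖^2*rho7 Ω₀ x/4 + μ0 * rho7 Ω₀ x) with hgdef
  have hA1 : IntegrableOn (fun x => ρ x^2 - Ω₀^2*‖x‖^2*ρ x/4) B1 := hρ2i.sub hVρ
  have hB1 : IntegrableOn (fun x => μ0 * ρ x) B1 := hρi.const_mul μ0
  have hA2 : IntegrableOn (fun x => rho7 Ω₀ x^2 - Ω₀^2*‖x‖^2*rho7 Ω₀ x/4) B1 :=
    hρ72i.sub hVρ7
  have hB2 : IntegrableOn (fun x => μ0 * rho7 Ω₀ x) B1 := hρ7i.const_mul μ0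
  have hF1 : IntegrableOn (fun x => ρ x^2 - Ω₀^2*‖x‖^2*ρ x/4 + μ0 * ρ x) B1 :=
    hA1.add hB1
  have hF2 : IntegrableOn
      (fun x => rho7 Ω₀ x^2 - Ω₀^2*‖x‖^2*rho7 Ω₀ x/4 + μ0 * rho7 Ω₀ x) B1 :=
    hA2.add hB2
  have hgi : IntegrableOn g B1 := hF1.sub hF2
  have hint : ∫ x in B1, g x = tfEnergy Ω₀ ρ - tfEnergy Ω₀ (rho7 Ω₀) := by
    rw [hgdef]
    rw [integral_sub hF1 hF2, integral_add hA1 hB1, integral_add hA2 hB2,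
      MeasureTheory.integral_const_mul, MeasureTheory.integral_const_mul, hρm, hmassρ7]
    show (tfEnergy Ω₀ ρ + μ0 * 1) - (tfEnergy Ω₀ (rho7 Ω₀) + μ0 * 1) = _
    ring
  have hg0 : ∀ᵐ x ∂(volume.restrict B1), 0 ≤ g x := by
    filter_upwards [hρ0] with x hx
    have hk := key1 (ρ x) (Ω₀^2*‖x‖^2/4 - μ0) hx
    rw [← hp' h x] at hk
    show 0 ≤ (ρ x^2 - Ω₀^2*‖x‖^2*ρ x/4 + μ0 * ρ x)
      - (rho7 Ω₀ x^2 - Ω₀^2*‖x‖^2*rho7 Ω₀ x/4 + μ0 * rho7 Ω₀ x)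
    nlinarith [hk]
  have h0int : (0:ℝ) ≤ ∫ x in B1, g x := integral_nonneg_of_ae hg0
  constructor
  · linarith [hint ▸ h0int]
  constructor
  · intro heq
    have hzero : ∫ x in B1, g x = 0 := by rw [hint, heq]; ring
    have hgz : g =ᵐ[volume.restrict B1] 0 :=
      (integral_eq_zero_iff_of_nonneg_ae hg0 hgi).mp hzero
    filter_upwards [hgz, hρ0] with x hgx hx
    have hgx0 : (ρ x^2 - Ω₀^2*‖x‖^2*ρ x/4 + μ0 * ρ x)
        - (rho7 Ω₀ x^2 - Ω₀^2*‖x‖^2*rho7 Ω₀ x/4 + μ0 * rho7 Ω₀ x) = 0 := hgx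
    have h0 : ((ρ x)^2 - (Ω₀^2*‖x‖^2/4 - μ0)*ρ x)
        - ((max 0 ((Ω₀^2*‖x‖^2/4 - μ0)/2))^2
          - (Ω₀^2*‖x‖^2/4 - μ0) * max 0 ((Ω₀^2*‖x‖^2/4 - μ0)/2)) = 0 := by
      rw [← hp' h x]
      nlinarith [hgx0]
    have := key2 (ρ x) (Ω₀^2*‖x‖^2/4 - μ0) hx h0
    rw [← hp' h x] at this
    exact this
  · intro hae
    show (∫ x in B1, ((ρ x) ^ 2 - Ω₀ ^ 2 * ‖x‖ ^ 2 * ρ x / 4)) = _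
    apply integral_congr_ae
    filter_upwards [hae] with x hx
    rw [hx]

lemma hole' (x : Pt) : rho7 Ω₀ x = 0 ↔ ‖x‖ ≤ R0 Ω₀ := by
  have hΩ := hΩ' h
  have hR0 : 0 ≤ R0 Ω₀ := Real.sqrt_nonneg _
  have hstep : rho7 Ω₀ x = max 0 (Ω₀^2/8*(‖x‖^2 - R0 Ω₀^2)) := by
    rw [rho7, hkey' h ‖x‖]
  rw [hstep, max_eq_left_iff]
  constructor
  · intro hle
    have hΩ2 : (0:ℝ) < Ω₀^2 := by positivity
    have h2 : ‖x‖^2 ≤ R0 Ω₀^2 := by nlinarith [hΩ2]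
    have := Real.sqrt_le_sqrt h2
    rwa [Real.sqrt_sq (norm_nonneg x), Real.sqrt_sq hR0] at this
  · intro hxR
    have h2 : ‖x‖^2 ≤ R0 Ω₀^2 := by nlinarith [norm_nonneg x]
    nlinarith
end

theorem stmt7 (Ω₀ : ℝ) (h : 4 / Real.sqrt π < Ω₀) :
    (∀ x : Pt, 0 ≤ rho7 Ω₀ x) ∧
    (∫ x in B1, rho7 Ω₀ x) = 1 ∧
    (∀ x ∈ B1, (rho7 Ω₀ x = 0 ↔ ‖x‖ ≤ R0 Ω₀)) ∧
    (∀ ρ : Pt → ℝ, tfAdm ρ →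
      tfEnergy Ω₀ (rho7 Ω₀) ≤ tfEnergy Ω₀ ρ ∧
      (tfEnergy Ω₀ ρ = tfEnergy Ω₀ (rho7 Ω₀) ↔ ρ =ᵐ[volume.restrict B1] rho7 Ω₀)) ∧
    tfEnergy Ω₀ (rho7 Ω₀) = Ω₀ / 4 * (8 / (3 * Real.sqrt π) - Ω₀) := by
  exact ⟨fun x => le_max_left _ _, mass_eq h, fun x _ => hole' h x,
    fun ρ hadm => var' h ρ hadm, energy_eq h⟩
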